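/- For every n ≥ 3 and every s with 1 ≤ s ≤ n−1, the map that sends each graph s-overlap cycle G for the permutation graphs on {1,…,n} (a cyclically ordered graph on vertex set Z_(n!(n−s)), in which every edge lies inside some n-window starting at a position congruent to 1 mod (n−s), and such that every permutation graph on {1,…,n} is order-isomorphic to exactly one n-window starting at a position congruent to 1 mod (n−s)) to the sequence (π_i)_{i ∈ Z_(n!)}, where π_i is the unique permutation whose permutation graph is order-isomorphic to the n-window of G starting at position 1+(i−1)(n−s), is a bijection onto the set of cyclic sequences (π_i)_{i ∈ Z_(n!)} that list every permutation of {1,…,n} exactly once and in which every consecutive pair (π_i, π_{i+1}) overlaps by s. (Such cyclic sequences are exactly the Euler tours of the clustered graph of s-overlapping n-permutations.) -/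

import Mathlib

namespace Stmt14

/-- The permutation graph of `π`: vertices `i < j` are adjacent iff `π i > π j`. -/
def permGraph {n : ℕ} (π : Equiv.Perm (Fin n)) : SimpleGraph (Fin n) where
  Adj i j := (i < j ∧ π j < π i) ∨ (j < i ∧ π i < π j)
  symm := ⟨by intro i j h; tauto⟩
  loopless := ⟨by intro i h; rcases h with ⟨h, _⟩ | ⟨h, _⟩ <;> exact absurd h (lt_irrefl i)⟩

/-- The pair of permutations `(σ, τ)` overlaps by `s`. -/
def POverlap (n s : ℕ) (σ τ : Equiv.Perm (Fin n)) : Prop :=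
  ∀ i j : ℕ, ∀ _hi : n - s ≤ i, ∀ _hij : i < j, ∀ hj : j < n,
    (σ ⟨i, by omega⟩ < σ ⟨j, hj⟩ ↔
     τ ⟨i - (n - s), by omega⟩ < τ ⟨j - (n - s), by omega⟩)

/-- The `n`-window of the cyclically ordered graph `G` on `Z_N` starting at position
`i : ℕ` (read cyclically). -/
def cwindow {N : ℕ} (G : SimpleGraph (Fin N)) (i : ℕ) (n : ℕ) : SimpleGraph (Fin n) where
  Adj a b := ∃ (ha : (i + a.val) % N < N) (hb : (i + b.val) % N < N),
    G.Adj ⟨(i + a.val) % N, ha⟩ ⟨(i + b.val) % N, hb⟩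
  symm := ⟨by rintro a b ⟨ha, hb, h⟩; exact ⟨hb, ha, h.symm⟩⟩
  loopless := ⟨by rintro a ⟨ha, hb, h⟩; exact G.irrefl h⟩

/-- A graph `s`-overlap cycle for the permutation graphs on `{1,…,n}`: a cyclically
ordered graph on `Z_(n!(n−s))` in which every edge lies inside some `n`-window starting
at a position divisible by `n−s`, and every permutation graph is order-isomorphic to
(i.e. equals) exactly one such `n`-window. -/
def IsPermGocycle (n s : ℕ) (G : SimpleGraph (Fin (Nat.factorial n * (n - s)))) : Prop :=
  (∀ a b : Fin (Nat.factorial n * (n - s)), G.Adj a b →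
    ∃ (k : Fin (Nat.factorial n)) (x y : Fin n),
      a.val = (k.val * (n - s) + x.val) % (Nat.factorial n * (n - s)) ∧
      b.val = (k.val * (n - s) + y.val) % (Nat.factorial n * (n - s))) ∧
  ∀ π : Equiv.Perm (Fin n), ∃! k : Fin (Nat.factorial n),
    cwindow G (k.val * (n - s)) n = permGraph π

/-- An Euler tour of the clustered graph of `s`-overlapping `n`-permutations: a cyclic
sequence listing every permutation exactly once in which every consecutive pair
overlaps by `s`. -/
def IsPermTourS (n s : ℕ) (p : Fin (Nat.factorial n) → Equiv.Perm (Fin n)) : Prop :=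
  Function.Bijective p ∧
  ∀ i : Fin (Nat.factorial n),
    POverlap n s (p i) (p ⟨(i.val + 1) % Nat.factorial n, Nat.mod_lt _ i.pos⟩)

lemma permGraph_adj {n : ℕ} (σ : Equiv.Perm (Fin n)) (i j : Fin n) :
    (permGraph σ).Adj i j ↔ (i < j ∧ σ j < σ i) ∨ (j < i ∧ σ i < σ j) := Iff.rfl

lemma lt_flip {α : Type*} [LinearOrder α] {a b : α} (h : a ≠ b) : a < b ↔ ¬ b < a :=
  ⟨fun h' h'' => absurd h'' (asymm h'), fun h' => (not_lt.mp h').lt_of_ne h⟩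

lemma permGraph_not_adj {n : ℕ} (σ : Equiv.Perm (Fin n)) {i j : Fin n} (h : i < j) :
    σ i < σ j ↔ ¬ (permGraph σ).Adj i j := by
  have hne : σ i ≠ σ j := fun e => absurd (σ.injective e) h.ne
  rw [permGraph_adj]
  constructor
  · rintro hlt (⟨_, h2⟩ | ⟨h1, _⟩)
    · exact absurd h2 (asymm hlt)
    · exact absurd h (asymm h1)
  · intro hn
    have : ¬ σ j < σ i := fun h2 => hn (Or.inl ⟨h, h2⟩)
    exact (lt_flip hne).mpr this

lemma permGraph_injective {n : ℕ} {σ τ : Equiv.Perm (Fin n)}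
    (h : permGraph σ = permGraph τ) : σ = τ := by
  have key : ∀ i j : Fin n, σ i < σ j ↔ τ i < τ j := by
    have base : ∀ i j : Fin n, i < j → (σ i < σ j ↔ τ i < τ j) := by
      intro i j hij
      rw [permGraph_not_adj σ hij, permGraph_not_adj τ hij, h]
    intro i j
    rcases lt_trichotomy i j with hij | hij | hij
    · exact base i j hij
    · subst hij; simp
    · have hne1 : σ i ≠ σ j := fun e => absurd (σ.injective e) hij.ne'
      have hne2 : τ i ≠ τ j := fun e => absurd (τ.injective e) hij.ne'
      rw [lt_flip hne1, lt_flip hne2, base j i hij]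
  have hmono : StrictMono (τ.symm.trans σ) := by
    intro a b hab
    have := (key (τ.symm a) (τ.symm b)).mpr (by simpa using hab)
    simpa using this
  have : StrictMono.orderIsoOfSurjective _ hmono (τ.symm.trans σ).surjective
      = OrderIso.refl (Fin n) := Subsingleton.elim _ _
  have hid : ∀ x, σ (τ.symm x) = x := by
    intro x
    have := congrArg (fun e => e x) this
    simpa [StrictMono.coe_orderIsoOfSurjective] using this
  ext i
  have := hid (τ i)
  simp only [Equiv.symm_apply_apply] at this
  exact congrArg Fin.val this






lemma mod_cases' (a b N nn : ℕ) (hnn : nn ≤ N) (ha : a < N + nn) (hb : b < N + nn)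
    (h : a % N = b % N) : a = b ∨ a = b + N ∨ b = a + N := by
  rcases Nat.lt_or_ge a N with h1 | h1 <;> rcases Nat.lt_or_ge b N with h2 | h2
  · rw [Nat.mod_eq_of_lt h1, Nat.mod_eq_of_lt h2] at h; omega
  · rw [Nat.mod_eq_of_lt h1, Nat.mod_eq_sub_mod h2, Nat.mod_eq_of_lt (by omega)] at h; omega
  · rw [Nat.mod_eq_sub_mod h1, Nat.mod_eq_of_lt (by omega), Nat.mod_eq_of_lt h2] at h; omega
  · rw [Nat.mod_eq_sub_mod h1, Nat.mod_eq_sub_mod h2, Nat.mod_eq_of_lt (by omega),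
      Nat.mod_eq_of_lt (by omega)] at h; omega

lemma arith (d M N nn k k' x y x' y' : ℕ) (hd : 0 < d) (hNd : N = M * d)
    (h2n : 2 * nn ≤ N) (hk : k < M) (hk' : k' < M)
    (hx : x < nn) (hy : y < nn) (hx' : x' < nn) (hy' : y' < nn)
    (h1 : (k * d + x) % N = (k' * d + x') % N)
    (h2 : (k * d + y) % N = (k' * d + y') % N) :
    (∃ j, x = x' + j * d ∧ y = y' + j * d ∧ k' = (k + j) % M) ∨
    (∃ j, x' = x + j * d ∧ y' = y + j * d ∧ k = (k' + j) % M) := by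
  have hnn : nn ≤ N := by omega
  have hkd : k * d + d ≤ N := by
    have : (k + 1) * d ≤ M * d := Nat.mul_le_mul_right d hk
    rw [Nat.add_mul, one_mul] at this; omega
  have hkd' : k' * d + d ≤ N := by
    have : (k' + 1) * d ≤ M * d := Nat.mul_le_mul_right d hk'
    rw [Nat.add_mul, one_mul] at this; omega
  have c1 := mod_cases' _ _ N nn hnn (by omega) (by omega) h1
  have c2 := mod_cases' _ _ N nn hnn (by omega) (by omega) h2
  rcases c1 with e1 | e1 | e1 <;> rcases c2 with e2 | e2 | e2
  · -- A = A', B = B'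
    rcases le_or_gt k k' with hkk | hkk
    · left
      have hj : k * d + (k' - k) * d = k' * d := by rw [← Nat.add_mul]; congr 1; omega
      refine ⟨k' - k, by omega, by omega, ?_⟩
      have h3 : k + (k' - k) = k' := by omega
      rw [h3, Nat.mod_eq_of_lt hk']
    · right
      have hj : k' * d + (k - k') * d = k * d := by rw [← Nat.add_mul]; congr 1; omega
      refine ⟨k - k', by omega, by omega, ?_⟩
      have h3 : k' + (k - k') = k := by omega
      rw [h3, Nat.mod_eq_of_lt hk]
  · exfalso; omega
  · exfalso; omega
  · exfalso; omega
  · -- A = A' + N, B = B' + N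
    left
    have hj : k * d + (k' + M - k) * d = k' * d + M * d := by
      rw [← Nat.add_mul, ← Nat.add_mul]; congr 1; omega
    refine ⟨k' + M - k, by omega, by omega, ?_⟩
    have h3 : k + (k' + M - k) = k' + M := by omega
    rw [h3, Nat.add_mod_right, Nat.mod_eq_of_lt hk']
  · exfalso; omega
  · exfalso; omega
  · exfalso; omega
  · -- A' = A + N, B' = B + N
    right
    have hj : k' * d + (k + M - k') * d = k * d + M * d := by
      rw [← Nat.add_mul, ← Nat.add_mul]; congr 1; omega
    refine ⟨k + M - k', by omega, by omega, ?_⟩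
    have h3 : k' + (k + M - k') = k + M := by omega
    rw [h3, Nat.add_mod_right, Nat.mod_eq_of_lt hk]

lemma fact_ge_two_mul {n : ℕ} (h : 3 ≤ n) : 2 * n ≤ n.factorial := by
  obtain ⟨m, rfl⟩ : ∃ m, n = m + 1 := ⟨n - 1, by omega⟩
  rw [Nat.factorial_succ]
  have h2 : 2 ≤ m.factorial := le_trans (by omega) (Nat.self_le_factorial m)
  calc 2 * (m + 1) = (m + 1) * 2 := by ring
    _ ≤ (m + 1) * m.factorial := Nat.mul_le_mul_left (m + 1) h2

lemma window_shift (M d i u : ℕ) (hu : d ≤ u) :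
    ((i + 1) % M * d + (u - d)) % (M * d) = (i * d + u) % (M * d) := by
  have h1 : (i + 1) % M * d = ((i + 1) * d) % (M * d) := (Nat.mul_mod_mul_right d (i + 1) M).symm
  rw [h1, Nat.mod_add_mod]
  congr 1
  rw [Nat.add_mul, one_mul, Nat.add_assoc, Nat.add_sub_cancel' hu]

lemma adj_congr {N : ℕ} (G : SimpleGraph (Fin N)) {a b c d : ℕ}
    (ha : a < N) (hb : b < N) (hc : c < N) (hd : d < N) (h1 : a = c) (h2 : b = d) :
    (G.Adj ⟨a, ha⟩ ⟨b, hb⟩ ↔ G.Adj ⟨c, hc⟩ ⟨d, hd⟩) := by subst h1; subst h2; rfl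


lemma cwindow_adj {N : ℕ} (G : SimpleGraph (Fin N)) (i n : ℕ) (a b : Fin n) (hN : 0 < N) :
    (cwindow G i n).Adj a b ↔
      G.Adj ⟨(i + a.val) % N, Nat.mod_lt _ hN⟩ ⟨(i + b.val) % N, Nat.mod_lt _ hN⟩ :=
  ⟨fun ⟨_, _, h⟩ => h, fun h => ⟨_, _, h⟩⟩

lemma overlap' {n s : ℕ} {σ τ : Equiv.Perm (Fin n)} (h : POverlap n s σ τ)
    (u v u' v' : ℕ) (hu : u < n) (hv : v < n) (hu' : u' < n) (hv' : v' < n)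
    (hul : n - s ≤ u) (hvl : n - s ≤ v) (e1 : u' = u - (n - s)) (e2 : v' = v - (n - s)) :
    (σ ⟨u, hu⟩ < σ ⟨v, hv⟩ ↔ τ ⟨u', hu'⟩ < τ ⟨v', hv'⟩) := by
  subst e1; subst e2
  rcases lt_trichotomy u v with huv | huv | huv
  · exact h u v hul huv hv
  · subst huv; simp
  · have h1 := h v u hvl huv hu
    have hne1 : σ ⟨u, hu⟩ ≠ σ ⟨v, hv⟩ := fun e => by
      have := σ.injective e; rw [Fin.mk.injEq] at this; omega
    have hne2 : τ ⟨u - (n - s), hu'⟩ ≠ τ ⟨v - (n - s), hv'⟩ := fun e => by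
      have := τ.injective e; rw [Fin.mk.injEq] at this; omega
    rw [lt_flip hne1, lt_flip hne2]
    exact not_congr h1

lemma pov_congr {n s M : ℕ} (p : Fin M → Equiv.Perm (Fin n)) {σ : Equiv.Perm (Fin n)}
    {a b : ℕ} {ha : a < M} (hb : b < M) (hab : a = b)
    (h : POverlap n s σ (p ⟨a, ha⟩)) : POverlap n s σ (p ⟨b, hb⟩) := by
  subst hab; exact h

lemma stepped {n s : ℕ} {p : Fin (Nat.factorial n) → Equiv.Perm (Fin n)}
    (hp : IsPermTourS n s p) :
    ∀ (j : ℕ) (k : Fin (Nat.factorial n)) (x y K u v : ℕ)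
      (hK : K < Nat.factorial n) (hx : x < n) (hy : y < n) (hu : u < n) (hv : v < n),
      j * (n - s) ≤ x → j * (n - s) ≤ y →
      K = (k.val + j) % Nat.factorial n → u = x - j * (n - s) → v = y - j * (n - s) →
      (p k ⟨x, hx⟩ < p k ⟨y, hy⟩ ↔ p ⟨K, hK⟩ ⟨u, hu⟩ < p ⟨K, hK⟩ ⟨v, hv⟩) := by
  intro j
  induction j with
  | zero =>
    intro k x y K u v hK hx hy hu hv hjx hjy eK eu ev
    have hKk : (⟨K, hK⟩ : Fin (Nat.factorial n)) = k :=
      Fin.ext (by show K = k.val; rw [eK]; simp [Nat.mod_eq_of_lt k.isLt])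
    have hux : (⟨u, hu⟩ : Fin n) = ⟨x, hx⟩ := Fin.ext (by show u = x; omega)
    have hvy : (⟨v, hv⟩ : Fin n) = ⟨y, hy⟩ := Fin.ext (by show v = y; omega)
    rw [hKk, hux, hvy]
  | succ j ih =>
    intro k x y K u v hK hx hy hu hv hjx hjy eK eu ev
    have hmul : (j + 1) * (n - s) = j * (n - s) + (n - s) := Nat.succ_mul j (n - s)
    have hjx' : j * (n - s) ≤ x := by omega
    have hjy' : j * (n - s) ≤ y := by omega
    have hKj : (k.val + j) % Nat.factorial n < Nat.factorial n :=
      Nat.mod_lt _ (Nat.factorial_pos n)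
    have h1 := ih k x y ((k.val + j) % Nat.factorial n) (x - j * (n - s)) (y - j * (n - s))
      hKj hx hy (by omega) (by omega) hjx' hjy' rfl rfl rfl
    have hsucc : ((⟨(k.val + j) % Nat.factorial n, hKj⟩ : Fin (Nat.factorial n)).val + 1) %
        Nat.factorial n = K := by
      show ((k.val + j) % Nat.factorial n + 1) % Nat.factorial n = K
      rw [Nat.mod_add_mod, eK, Nat.add_assoc]
    have hov' : POverlap n s (p ⟨(k.val + j) % Nat.factorial n, hKj⟩) (p ⟨K, hK⟩) :=
      pov_congr p hK hsucc (hp.2 ⟨(k.val + j) % Nat.factorial n, hKj⟩)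
    have h2 := overlap' hov' (x - j * (n - s)) (y - j * (n - s)) u v
      (by omega) (by omega) hu hv (by omega) (by omega) (by omega) (by omega)
    exact h1.trans h2

lemma consist_one {n s : ℕ} {p : Fin (Nat.factorial n) → Equiv.Perm (Fin n)}
    (hp : IsPermTourS n s p) (k k' : Fin (Nat.factorial n)) (x y x' y' : Fin n)
    (j : ℕ) (ex : x.val = x'.val + j * (n - s)) (ey : y.val = y'.val + j * (n - s))
    (ek : k'.val = (k.val + j) % Nat.factorial n) :
    ((permGraph (p k)).Adj x y ↔ (permGraph (p k')).Adj x' y') := by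
  have s1 := stepped hp j k x.val y.val k'.val x'.val y'.val k'.isLt x.isLt y.isLt
    x'.isLt y'.isLt (by omega) (by omega) ek (by omega) (by omega)
  have s2 := stepped hp j k y.val x.val k'.val y'.val x'.val k'.isLt y.isLt x.isLt
    y'.isLt x'.isLt (by omega) (by omega) ek (by omega) (by omega)
  simp only [Fin.eta] at s1 s2
  rw [permGraph_adj, permGraph_adj]
  have hxy : x < y ↔ x' < y' := by rw [Fin.lt_def, Fin.lt_def]; omega
  have hyx : y < x ↔ y' < x' := by rw [Fin.lt_def, Fin.lt_def]; omega
  constructor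
  · rintro (⟨ha, hb⟩ | ⟨ha, hb⟩)
    · exact Or.inl ⟨hxy.mp ha, s2.mp hb⟩
    · exact Or.inr ⟨hyx.mp ha, s1.mp hb⟩
  · rintro (⟨ha, hb⟩ | ⟨ha, hb⟩)
    · exact Or.inl ⟨hxy.mpr ha, s2.mpr hb⟩
    · exact Or.inr ⟨hyx.mpr ha, s1.mpr hb⟩

lemma consist {n s : ℕ} (hn : 3 ≤ n) (hs1 : 1 ≤ s) (hs2 : s ≤ n - 1)
    {p : Fin (Nat.factorial n) → Equiv.Perm (Fin n)} (hp : IsPermTourS n s p)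
    (k k' : Fin (Nat.factorial n)) (x y x' y' : Fin n)
    (h1 : (k.val * (n - s) + x.val) % (Nat.factorial n * (n - s)) =
          (k'.val * (n - s) + x'.val) % (Nat.factorial n * (n - s)))
    (h2 : (k.val * (n - s) + y.val) % (Nat.factorial n * (n - s)) =
          (k'.val * (n - s) + y'.val) % (Nat.factorial n * (n - s))) :
    ((permGraph (p k)).Adj x y ↔ (permGraph (p k')).Adj x' y') := by
  have hd : 0 < n - s := by omega
  have h2n : 2 * n ≤ Nat.factorial n * (n - s) :=
    le_trans (fact_ge_two_mul hn) (Nat.le_mul_of_pos_right _ hd)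
  have harith := arith (n - s) (Nat.factorial n) (Nat.factorial n * (n - s)) n
    k.val k'.val x.val y.val x'.val y'.val hd rfl h2n k.isLt k'.isLt
    x.isLt y.isLt x'.isLt y'.isLt h1 h2
  rcases harith with ⟨j, ex, ey, ek⟩ | ⟨j, ex, ey, ek⟩
  · exact consist_one hp k k' x y x' y' j ex ey ek
  · exact (consist_one hp k' k x' y' x y j ex ey ek).symm

/-- Graph of a tour `p`. -/
def tourGraph (n s : ℕ) (p : Fin (Nat.factorial n) → Equiv.Perm (Fin n)) :
    SimpleGraph (Fin (Nat.factorial n * (n - s))) where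
  Adj a b := a ≠ b ∧ ∃ (k : Fin (Nat.factorial n)) (x y : Fin n),
    a.val = (k.val * (n - s) + x.val) % (Nat.factorial n * (n - s)) ∧
    b.val = (k.val * (n - s) + y.val) % (Nat.factorial n * (n - s)) ∧
    (permGraph (p k)).Adj x y
  symm := ⟨by
    rintro a b ⟨hne, k, x, y, h1, h2, h3⟩
    exact ⟨hne.symm, k, y, x, h2, h1, h3.symm⟩⟩
  loopless := ⟨fun a h => h.1 rfl⟩

lemma tourGraph_win {n s : ℕ} (hn : 3 ≤ n) (hs1 : 1 ≤ s) (hs2 : s ≤ n - 1)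
    {p : Fin (Nat.factorial n) → Equiv.Perm (Fin n)} (hp : IsPermTourS n s p)
    (k : Fin (Nat.factorial n)) :
    permGraph (p k) = cwindow (tourGraph n s p) (k.val * (n - s)) n := by
  have hd : 0 < n - s := by omega
  have hN : 0 < Nat.factorial n * (n - s) := Nat.mul_pos (Nat.factorial_pos n) hd
  have hnN : n ≤ Nat.factorial n * (n - s) :=
    le_trans (by omega) (le_trans (fact_ge_two_mul hn) (Nat.le_mul_of_pos_right _ hd))
  ext x y
  rw [cwindow_adj _ _ _ _ _ hN]
  show (permGraph (p k)).Adj x y ↔ (tourGraph n s p).Adj _ _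
  constructor
  · intro h
    refine ⟨?_, k, x, y, rfl, rfl, h⟩
    intro he
    rw [Fin.mk.injEq] at he
    have hxy : x ≠ y := h.ne
    have hmod : x.val % (Nat.factorial n * (n - s)) = y.val % (Nat.factorial n * (n - s)) :=
      Nat.ModEq.add_left_cancel' _ he
    rw [Nat.mod_eq_of_lt (lt_of_lt_of_le x.isLt hnN),
      Nat.mod_eq_of_lt (lt_of_lt_of_le y.isLt hnN)] at hmod
    exact hxy (Fin.ext hmod)
  · rintro ⟨hne, k', x', y', h1, h2, h3⟩
    exact (consist hn hs1 hs2 hp k' k x' y' x y h1.symm h2.symm).mp h3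

lemma toTour {n s : ℕ} (hn : 3 ≤ n) (hs1 : 1 ≤ s) (hs2 : s ≤ n - 1)
    (G : SimpleGraph (Fin (Nat.factorial n * (n - s)))) (hG : IsPermGocycle n s G) :
    ∃ p : Fin (Nat.factorial n) → Equiv.Perm (Fin n), IsPermTourS n s p ∧
      ∀ k, permGraph (p k) = cwindow G (k.val * (n - s)) n := by
  classical
  have hd : 0 < n - s := by omega
  have hN : 0 < Nat.factorial n * (n - s) := Nat.mul_pos (Nat.factorial_pos n) hd
  have hf : ∀ π : Equiv.Perm (Fin n), ∃ k : Fin (Nat.factorial n),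
      cwindow G (k.val * (n - s)) n = permGraph π := fun π => (hG.2 π).exists
  choose f hfspec using hf
  have hfinj : Function.Injective f := by
    intro π π' h
    apply permGraph_injective
    rw [← hfspec π, ← hfspec π', h]
  have hfbij : Function.Bijective f := by
    rw [Fintype.bijective_iff_injective_and_card]
    exact ⟨hfinj, by simp [Fintype.card_perm]⟩
  let e := Equiv.ofBijective f hfbij
  have hwin : ∀ k : Fin (Nat.factorial n),
      permGraph (e.symm k) = cwindow G (k.val * (n - s)) n := by
    intro k
    have h1 := hfspec (e.symm k)
    have h2 : f (e.symm k) = k := e.apply_symm_apply k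
    rw [h2] at h1
    exact h1.symm
  refine ⟨fun k => e.symm k, ⟨e.symm.bijective, ?_⟩, hwin⟩
  intro i
  show POverlap n s (e.symm i) (e.symm ⟨(i.val + 1) % Nat.factorial n, Nat.mod_lt _ i.pos⟩)
  intro u v hu huv hv
  have hN : 0 < Nat.factorial n * (n - s) := Nat.mul_pos (Nat.factorial_pos n) hd
  have hip : ((i.val + 1) % Nat.factorial n) < Nat.factorial n := Nat.mod_lt _ i.pos
  have w1 := hwin i
  have w2 := hwin ⟨(i.val + 1) % Nat.factorial n, hip⟩
  have huv' : (⟨u, by omega⟩ : Fin n) < ⟨v, hv⟩ := Fin.mk_lt_mk.mpr huv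
  have huv'' : (⟨u - (n - s), by omega⟩ : Fin n) < ⟨v - (n - s), by omega⟩ :=
    Fin.mk_lt_mk.mpr (by omega)
  rw [permGraph_not_adj _ huv', permGraph_not_adj _ huv'', w1, w2,
    cwindow_adj _ _ _ _ _ hN, cwindow_adj _ _ _ _ _ hN]
  apply not_congr
  apply adj_congr
  · exact (window_shift (Nat.factorial n) (n - s) i.val u hu).symm
  · exact (window_shift (Nat.factorial n) (n - s) i.val v (by omega)).symm

lemma windows_le {n s : ℕ} (hn : 3 ≤ n) (hs1 : 1 ≤ s) (hs2 : s ≤ n - 1)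
    (G G' : SimpleGraph (Fin (Nat.factorial n * (n - s))))
    (hG1 : ∀ a b : Fin (Nat.factorial n * (n - s)), G.Adj a b →
      ∃ (k : Fin (Nat.factorial n)) (x y : Fin n),
        a.val = (k.val * (n - s) + x.val) % (Nat.factorial n * (n - s)) ∧
        b.val = (k.val * (n - s) + y.val) % (Nat.factorial n * (n - s)))
    (h : ∀ k : Fin (Nat.factorial n),
      cwindow G (k.val * (n - s)) n = cwindow G' (k.val * (n - s)) n)
    (a b : Fin (Nat.factorial n * (n - s))) (hab : G.Adj a b) : G'.Adj a b := by
  have hd : 0 < n - s := by omega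
  have hN : 0 < Nat.factorial n * (n - s) := Nat.mul_pos (Nat.factorial_pos n) hd
  obtain ⟨k, x, y, h1, h2⟩ := hG1 a b hab
  have ha : a = ⟨(k.val * (n - s) + x.val) % (Nat.factorial n * (n - s)), Nat.mod_lt _ hN⟩ :=
    Fin.ext h1
  have hb : b = ⟨(k.val * (n - s) + y.val) % (Nat.factorial n * (n - s)), Nat.mod_lt _ hN⟩ :=
    Fin.ext h2
  rw [ha, hb] at hab ⊢
  have hw : (cwindow G (k.val * (n - s)) n).Adj x y := (cwindow_adj G _ n x y hN).mpr hab
  rw [h k] at hw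
  exact (cwindow_adj G' _ n x y hN).mp hw

lemma tourGraph_gocycle {n s : ℕ} (hn : 3 ≤ n) (hs1 : 1 ≤ s) (hs2 : s ≤ n - 1)
    {p : Fin (Nat.factorial n) → Equiv.Perm (Fin n)} (hp : IsPermTourS n s p) :
    IsPermGocycle n s (tourGraph n s p) := by
  constructor
  · rintro a b ⟨hne, k, x, y, h1, h2, _⟩
    exact ⟨k, x, y, h1, h2⟩
  · intro π
    obtain ⟨k, hk⟩ := hp.1.2 π
    refine ⟨k, ?_, ?_⟩
    · show cwindow (tourGraph n s p) (k.val * (n - s)) n = permGraph π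
      rw [← tourGraph_win hn hs1 hs2 hp k, hk]
    · intro k' hk'
      have hk'' : cwindow (tourGraph n s p) (k'.val * (n - s)) n = permGraph π := hk'
      rw [← tourGraph_win hn hs1 hs2 hp k'] at hk''
      exact hp.1.1 ((permGraph_injective hk'').trans hk.symm)

/-- for `n ≥ 3` and `1 ≤ s ≤ n−1`, the map reading off the permutations
from the relevant `n`-windows is a bijection from the set of graph `s`-overlap cycles
for permutation graphs on `{1,…,n}` onto the set of Euler tours of the clustered graph
of `s`-overlapping `n`-permutations, preserving the order in which `S_n` is covered. -/
theorem perm_gocycle_tour_bijection (n s : ℕ) (hn : 3 ≤ n)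
    (hs1 : 1 ≤ s) (hs2 : s ≤ n - 1) :
    ∃ F : {G : SimpleGraph (Fin (Nat.factorial n * (n - s))) // IsPermGocycle n s G} →
          {p : Fin (Nat.factorial n) → Equiv.Perm (Fin n) // IsPermTourS n s p},
      Function.Bijective F ∧
      ∀ (G : {G : SimpleGraph (Fin (Nat.factorial n * (n - s))) // IsPermGocycle n s G})
        (k : Fin (Nat.factorial n)),
        permGraph ((F G).val k) = cwindow G.val (k.val * (n - s)) n := by
  classical
  have hT : ∀ G : {G : SimpleGraph (Fin (Nat.factorial n * (n - s))) // IsPermGocycle n s G},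
      ∃ q : {p : Fin (Nat.factorial n) → Equiv.Perm (Fin n) // IsPermTourS n s p},
        ∀ k : Fin (Nat.factorial n),
          permGraph (q.val k) = cwindow G.val (k.val * (n - s)) n := by
    intro G
    obtain ⟨p, hp, hw⟩ := toTour hn hs1 hs2 G.val G.prop
    exact ⟨⟨p, hp⟩, hw⟩
  choose F hF using hT
  refine ⟨F, ⟨?_, ?_⟩, hF⟩
  · intro G G' hFG
    apply Subtype.ext
    have hww : ∀ k : Fin (Nat.factorial n),
        cwindow G.val (k.val * (n - s)) n = cwindow G'.val (k.val * (n - s)) n := by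
      intro k
      rw [← hF G k, ← hF G' k, hFG]
    ext a b
    constructor
    · exact windows_le hn hs1 hs2 G.val G'.val G.prop.1 hww a b
    · exact windows_le hn hs1 hs2 G'.val G.val G'.prop.1 (fun k => (hww k).symm) a b
  · intro q
    have hw := tourGraph_win hn hs1 hs2 q.prop
    refine ⟨⟨tourGraph n s q.val, tourGraph_gocycle hn hs1 hs2 q.prop⟩, ?_⟩
    apply Subtype.ext
    funext k
    apply permGraph_injective
    rw [hF ⟨tourGraph n s q.val, tourGraph_gocycle hn hs1 hs2 q.prop⟩ k]
    exact (hw k).symm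


end Stmt14
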